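/- (Translation of autocorrelation risk to excess variance: risk decomposition identity.) Let T ≥ 2, ε ∈ (0,1), μ̄ ∈ ℝ, v ≥ 0, and ρ̄ ∈ ℝ with 1 + (T−1)ρ̄ ≥ 0. Set v̂ = (1 + (T−1)ρ̄)·v. Then the closed-form worst-case growth rate satisfies the identity −(1/2)·( 1 − ( 1 − μ̄ + sqrt( ((1−ε)(1 + (T−1)ρ̄)) / (εT) )·sqrt(v) )² − ((T−1)(1−ρ̄)/(εT))·v ) = v/(2ε) − (1/2)·( 1 − ( 1 − μ̄ + sqrt( (1−ε)/(εT) )·sqrt(v̂) )² + v̂/(εT) ). In particular, the total risk −G_ε(w) decomposes into a persistent risk term v/(2ε) that is independent of ρ̄ and a compounding risk term that depends on the autocorrelations only through the modified variance v̂ = (1 + (T−1)ρ̄)·v. -/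
import Mathlib


/-- Translation of autocorrelation risk to excess variance: the negative worst-case
growth rate decomposes as a persistent risk `v/(2ε)` plus a compounding risk that
depends on the autocorrelations only through the modified variance
`v̂ = (1 + (T-1)ρ̄)·v`. -/
theorem risk_decomposition (T : ℕ) (hT : 2 ≤ T) (ε : ℝ) (hε : ε ∈ Set.Ioo (0 : ℝ) 1)
    (μbar v ρbar : ℝ) (hv : 0 ≤ v) (hρ : 0 ≤ 1 + ((T : ℝ) - 1) * ρbar) :
    -((1 / 2) * (1 -
        (1 - μbar +
          Real.sqrt ((1 - ε) * (1 + ((T : ℝ) - 1) * ρbar) / (ε * T)) *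
            Real.sqrt v) ^ 2 -
        (((T : ℝ) - 1) * (1 - ρbar) / (ε * T)) * v)) =
      v / (2 * ε) -
        (1 / 2) * (1 -
          (1 - μbar +
            Real.sqrt ((1 - ε) / (ε * T)) *
              Real.sqrt ((1 + ((T : ℝ) - 1) * ρbar) * v)) ^ 2 +
          ((1 + ((T : ℝ) - 1) * ρbar) * v) / (ε * T)) := by
  obtain ⟨hε0, hε1⟩ := hε
  have hT0 : (0 : ℝ) < T := by positivity
  have hεT : (0 : ℝ) < ε * T := by positivity
  have h1 : Real.sqrt ((1 - ε) * (1 + ((T : ℝ) - 1) * ρbar) / (ε * T)) * Real.sqrt v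
      = Real.sqrt ((1 - ε) / (ε * T)) * Real.sqrt ((1 + ((T : ℝ) - 1) * ρbar) * v) := by
    have h1ε : (0:ℝ) ≤ 1 - ε := by linarith
    rw [← Real.sqrt_mul (div_nonneg (mul_nonneg h1ε hρ) hεT.le) v,
        ← Real.sqrt_mul (div_nonneg h1ε hεT.le)]
    ring_nf
  rw [h1]
  have hε' : ε ≠ 0 := ne_of_gt hε0
  have hT' : (T : ℝ) ≠ 0 := ne_of_gt hT0
  field_simp
  ring
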